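/- arXiv:1905.11629 — 3 statements merged into one kernel-verified Lean document; each statement's English description precedes it below -/
import Mathlib

section
/- For density matrices ρ, σ and ε ∈ (0,1), the smooth min-relative entropy D_min^ε(ρ‖σ) converges to D_min(ρ‖σ) as ε → 0: lim_{ε→0} D_min^ε(ρ‖σ) = D_min(ρ‖σ) = −log₂ Tr[Π_ρ σ]. -/
open Matrix
open scoped BigOperators ComplexOrder

/-- Apply a real function to a Hermitian matrix via its spectral decomposition
(junk value `0` for non-Hermitian input). -/
noncomputable def mfun {n : Type*} [Fintype n] [DecidableEq n]
    (f : ℝ → ℝ) (A : Matrix n n ℂ) : Matrix n n ℂ :=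
  if h : A.IsHermitian then
    (h.eigenvectorUnitary : Matrix n n ℂ) *
      Matrix.diagonal (fun i => (f (h.eigenvalues i) : ℂ)) *
      star (h.eigenvectorUnitary : Matrix n n ℂ)
  else 0

/-- Real power of a Hermitian matrix. -/
noncomputable def mpow {n : Type*} [Fintype n] [DecidableEq n]
    (A : Matrix n n ℂ) (p : ℝ) : Matrix n n ℂ :=
  mfun (fun x => x ^ p) A

/-- Square root of a positive semidefinite matrix. -/
noncomputable def msqrt {n : Type*} [Fintype n] [DecidableEq n]
    (A : Matrix n n ℂ) : Matrix n n ℂ :=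
  mfun Real.sqrt A

/-- Trace norm (Schatten 1-norm). -/
noncomputable def traceNorm {n : Type*} [Fintype n] [DecidableEq n]
    (A : Matrix n n ℂ) : ℝ :=
  ((msqrt (Aᴴ * A)).trace).re

/-- Schatten `p`-norm. -/
noncomputable def schattenNorm {n : Type*} [Fintype n] [DecidableEq n]
    (p : ℝ) (A : Matrix n n ℂ) : ℝ :=
  (((mfun (fun x => x ^ (p / 2)) (Aᴴ * A)).trace).re) ^ (1 / p)

/-- Uhlmann fidelity `‖√ρ √σ‖₁²`. -/
noncomputable def fidelity {n : Type*} [Fintype n] [DecidableEq n]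
    (ρ σ : Matrix n n ℂ) : ℝ :=
  (traceNorm (msqrt ρ * msqrt σ)) ^ 2

/-- A density matrix: positive semidefinite with unit trace. -/
def IsDensity {n : Type*} [Fintype n] (ρ : Matrix n n ℂ) : Prop :=
  ρ.PosSemidef ∧ ρ.trace = 1

/-- A CPTP map (quantum channel): Choi matrix PSD and trace preserving. -/
def IsCPTP {I J : Type*} [Fintype I] [DecidableEq I] [Fintype J] [DecidableEq J]
    (N : Matrix I I ℂ →ₗ[ℂ] Matrix J J ℂ) : Prop :=
  (Matrix.of (fun (p q : I × J) =>
      N (Matrix.single p.1 q.1 1) p.2 q.2)).PosSemidef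
  ∧ ∀ A : Matrix I I ℂ, (N A).trace = A.trace

/-- `P` is the orthogonal projection onto the support of `ρ`. -/
def IsSupportProj {n : Type*} [Fintype n] (ρ P : Matrix n n ℂ) : Prop :=
  P.IsHermitian ∧ P * P = P ∧
    LinearMap.range P.mulVecLin = LinearMap.range ρ.mulVecLin

/-- Max-relative entropy `D_max(ρ‖σ) := inf {λ ≥ 0 : ρ ≤ 2^λ σ}` (with value `⊤` if
no such `λ` exists). -/
noncomputable def Dmax {n : Type*} [Fintype n] (ρ σ : Matrix n n ℂ) : EReal :=
  sInf {x : EReal | ∃ l : ℝ, 0 ≤ l ∧ (((2:ℝ) ^ l) • σ - ρ).PosSemidef ∧ x = (l : EReal)}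

/-- Smooth max-relative entropy (trace-distance smoothing). -/
noncomputable def DmaxSmooth {n : Type*} [Fintype n] [DecidableEq n]
    (ε : ℝ) (ρ σ : Matrix n n ℂ) : EReal :=
  sInf {x : EReal | ∃ ρt : Matrix n n ℂ, IsDensity ρt ∧
    (1/2) * traceNorm (ρt - ρ) ≤ ε ∧ x = Dmax ρt σ}

/-- Smooth min-relative entropy (hypothesis testing relative entropy). -/
noncomputable def DminSmooth {n : Type*} [Fintype n] [DecidableEq n]
    (ε : ℝ) (ρ σ : Matrix n n ℂ) : ℝ :=
  - Real.logb 2 (sInf {t : ℝ | ∃ Λ : Matrix n n ℂ, Λ.PosSemidef ∧ (1 - Λ).PosSemidef ∧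
      1 - ε ≤ ((Λ * ρ).trace).re ∧ t = ((Λ * σ).trace).re})

/-- Petz–Rényi relative entropy `D_α(ρ‖σ) = (α−1)⁻¹ log₂ Tr[ρ^α σ^{1−α}]`. -/
noncomputable def Dpetz {n : Type*} [Fintype n] [DecidableEq n]
    (α : ℝ) (ρ σ : Matrix n n ℂ) : ℝ :=
  (α - 1)⁻¹ * Real.logb 2 (((mpow ρ α * mpow σ (1 - α)).trace).re)

/-- Sandwiched Rényi relative entropy
`D̃_α(ρ‖σ) = (α−1)⁻¹ log₂ Tr[(σ^{(1−α)/2α} ρ σ^{(1−α)/2α})^α]`. -/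
noncomputable def Dsand {n : Type*} [Fintype n] [DecidableEq n]
    (α : ℝ) (ρ σ : Matrix n n ℂ) : ℝ :=
  (α - 1)⁻¹ * Real.logb 2
    (((mpow (mpow σ ((1 - α)/(2*α)) * ρ * mpow σ ((1 - α)/(2*α))) α).trace).re)

/-- Umegaki relative entropy `D(ρ‖σ) = Tr[ρ (log₂ ρ − log₂ σ)]`. -/
noncomputable def relEnt {n : Type*} [Fintype n] [DecidableEq n]
    (ρ σ : Matrix n n ℂ) : ℝ :=
  ((ρ * (mfun (Real.logb 2) ρ - mfun (Real.logb 2) σ)).trace).re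

/-- `n`-fold tensor (Kronecker) power of a matrix. -/
noncomputable def tpow {I : Type*} (A : Matrix I I ℂ) (k : ℕ) :
    Matrix (Fin k → I) (Fin k → I) ℂ :=
  Matrix.of fun i j => ∏ t, A (i t) (j t)

/-- The qubit state `|0⟩⟨0|`. -/
noncomputable def e00 : Matrix (Fin 2) (Fin 2) ℂ := Matrix.single 0 0 1

/-- The qubit state `|1⟩⟨1|`. -/
noncomputable def e11 : Matrix (Fin 2) (Fin 2) ℂ := Matrix.single 1 1 1

/-- The state `π_M = M⁻¹|0⟩⟨0| + (1 − M⁻¹)|1⟩⟨1|`. -/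
noncomputable def piM (M : ℝ) : Matrix (Fin 2) (Fin 2) ℂ :=
  (M⁻¹ : ℝ) • e00 + ((1 - M⁻¹ : ℝ)) • e11

set_option linter.unusedSectionVars false
set_option linter.unreachableTactic false
set_option linter.unusedTactic false
set_option linter.unusedVariables false
set_option maxHeartbeats 1000000

/-- square root of a PSD matrix via its spectral decomposition -/
noncomputable def Matrix.PosSemidef.sqrt {n : Type*} [Fintype n] [DecidableEq n]
    {A : Matrix n n ℂ} (hA : A.PosSemidef) : Matrix n n ℂ :=
  (hA.1.eigenvectorUnitary : Matrix n n ℂ) *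
    Matrix.diagonal (fun i => ((Real.sqrt (hA.1.eigenvalues i) : ℝ) : ℂ)) *
    star (hA.1.eigenvectorUnitary : Matrix n n ℂ)

lemma Matrix.PosSemidef.posSemidef_sqrt {n : Type*} [Fintype n] [DecidableEq n]
    {A : Matrix n n ℂ} (hA : A.PosSemidef) : hA.sqrt.PosSemidef := by
  unfold Matrix.PosSemidef.sqrt
  rw [Matrix.star_eq_conjTranspose]
  refine Matrix.PosSemidef.mul_mul_conjTranspose_same ?_ _
  refine Matrix.posSemidef_diagonal_iff.mpr fun i => ?_
  rw [Complex.zero_le_real]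
  exact Real.sqrt_nonneg _

lemma Matrix.PosSemidef.sqrt_mul_self {n : Type*} [Fintype n] [DecidableEq n]
    {A : Matrix n n ℂ} (hA : A.PosSemidef) : hA.sqrt * hA.sqrt = A := by
  have hUU' : star (hA.1.eigenvectorUnitary : Matrix n n ℂ) * (hA.1.eigenvectorUnitary : Matrix n n ℂ) = 1 :=
    (Matrix.mem_unitaryGroup_iff').mp hA.1.eigenvectorUnitary.2
  have hspec : A = (hA.1.eigenvectorUnitary : Matrix n n ℂ) * Matrix.diagonal (RCLike.ofReal ∘ hA.1.eigenvalues) *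
      star (hA.1.eigenvectorUnitary : Matrix n n ℂ) := hA.1.spectral_theorem
  unfold Matrix.PosSemidef.sqrt
  conv_rhs => rw [hspec]
  set U : Matrix n n ℂ := (hA.1.eigenvectorUnitary : Matrix n n ℂ)
  set D := Matrix.diagonal (fun i => ((Real.sqrt (hA.1.eigenvalues i) : ℝ) : ℂ)) with hD
  calc U * D * star U * (U * D * star U) = U * D * (star U * U) * D * star U := by
        simp only [mul_assoc]
  _ = _ := by
    rw [hUU', mul_one, mul_assoc U, hD, Matrix.diagonal_mul_diagonal]
    congr 2
    rw [Matrix.diagonal_eq_diagonal_iff]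
    intro i
    show ((Real.sqrt _ : ℝ) : ℂ) * ((Real.sqrt _ : ℝ) : ℂ) = ((hA.1.eigenvalues i : ℝ) : ℂ)
    rw [← Complex.ofReal_mul, Real.mul_self_sqrt (hA.eigenvalues_nonneg i)]
namespace DminAux
variable {n : Type*} [Fintype n] [DecidableEq n]


lemma mat_ext {M N : Matrix n n ℂ} (h : ∀ x, M *ᵥ x = N *ᵥ x) : M = N := by
  ext i j
  have := congrFun (h (Pi.single j 1)) i
  simpa [Matrix.mulVec_single] using this

lemma trace_re_nonneg {A : Matrix n n ℂ} (hA : A.PosSemidef) : 0 ≤ A.trace.re := by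
  have h : ∀ i, 0 ≤ (A i i).re := by
    intro i
    have h2 := hA.dotProduct_mulVec_nonneg (Pi.single i 1)
    have h3 : star (Pi.single i 1 : n → ℂ) ⬝ᵥ A *ᵥ (Pi.single i 1) = A i i := by
      simp [Matrix.mulVec_single, dotProduct, Pi.single_apply, apply_ite]
    rw [h3] at h2
    exact (Complex.le_def.mp h2).1
  rw [Matrix.trace]
  rw [Complex.re_sum]
  exact Finset.sum_nonneg fun i _ => h i

lemma trace_mul_re_nonneg {A B : Matrix n n ℂ} (hA : A.PosSemidef) (hB : B.PosSemidef) :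
    0 ≤ ((A * B).trace).re := by
  have hs := hA.posSemidef_sqrt
  have h1 : A * B = hA.sqrt * (hA.sqrt * B) := by rw [← mul_assoc, hA.sqrt_mul_self]
  rw [h1, Matrix.trace_mul_comm]
  have h2 : hA.sqrt * B * hA.sqrt = hA.sqrtᴴ * B * hA.sqrt := by rw [hs.1]
  have := hB.conjTranspose_mul_mul_same hA.sqrt
  rw [← h2] at this
  exact trace_re_nonneg this

/-- monotonicity of trace against PSD -/
lemma trace_mul_mono {A B C : Matrix n n ℂ} (hC : C.PosSemidef) (hAB : (B - A).PosSemidef) :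
    ((A * C).trace).re ≤ ((B * C).trace).re := by
  have := trace_mul_re_nonneg hAB hC
  rw [Matrix.sub_mul, Matrix.trace_sub, Complex.sub_re] at this
  linarith

lemma one_sub_psd {σ : Matrix n n ℂ} (hσ : σ.PosSemidef) (h1 : σ.trace = 1) :
    (1 - σ).PosSemidef := by
  have hH := hσ.1
  have hspec : σ = (hH.eigenvectorUnitary : Matrix n n ℂ) * Matrix.diagonal (RCLike.ofReal ∘ hH.eigenvalues) * star (hH.eigenvectorUnitary : Matrix n n ℂ) := hH.spectral_theorem
  set U : Matrix n n ℂ := (hH.eigenvectorUnitary : Matrix n n ℂ) with hU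
  have hUU : U * star U = 1 := (Matrix.mem_unitaryGroup_iff).mp hH.eigenvectorUnitary.2
  have htr : ∑ i, hH.eigenvalues i = 1 := by
    have : σ.trace = ∑ i, (hH.eigenvalues i : ℂ) := by
      conv_lhs => rw [hspec]
      rw [Matrix.trace_mul_comm, ← mul_assoc]
      have : star U * U = 1 := (Matrix.mem_unitaryGroup_iff').mp hH.eigenvectorUnitary.2
      rw [this, one_mul, Matrix.trace_diagonal]
      simp
    rw [h1] at this
    exact_mod_cast congrArg Complex.re this.symm
  have hle : ∀ i, hH.eigenvalues i ≤ 1 := by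
    intro i
    rw [← htr]
    exact Finset.single_le_sum (fun j _ => hσ.eigenvalues_nonneg j) (Finset.mem_univ i)
  have h2 : 1 - σ = U * Matrix.diagonal (fun i => ((1 - hH.eigenvalues i : ℝ) : ℂ)) * star U := by
    have hone : (1 : Matrix n n ℂ) = U * 1 * star U := by rw [mul_one, hUU]
    conv_lhs => rw [hspec, hone]
    rw [← Matrix.sub_mul, ← Matrix.mul_sub]
    congr 1
    rw [← Matrix.diagonal_one, Matrix.diagonal_sub]
    congr 1
    ext i
    simp [Function.comp]
  rw [h2]
  refine Matrix.PosSemidef.mul_mul_conjTranspose_same ?_ U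
  · rw [Matrix.posSemidef_diagonal_iff]
    intro i
    rw [Complex.zero_le_real]
    linarith [hle i]





/-- `Λ - Λ² ⪰ 0` when `0 ⪯ Λ ⪯ 1`. -/
lemma sub_sq_psd {Λ : Matrix n n ℂ} (hΛ : Λ.PosSemidef) (h1 : (1 - Λ).PosSemidef) :
    (Λ - Λ * Λ).PosSemidef := by
  obtain ⟨s, hs1, hs2⟩ : ∃ s : Matrix n n ℂ, s.PosSemidef ∧ s * s = Λ :=
    ⟨hΛ.sqrt, hΛ.posSemidef_sqrt, hΛ.sqrt_mul_self⟩
  have key : Λ - Λ * Λ = sᴴ * (1 - Λ) * s := by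
    rw [hs1.1, Matrix.mul_sub, Matrix.sub_mul, mul_one, hs2]
    congr 1
    rw [← hs2]
    simp [mul_assoc]
  rw [key]
  exact h1.conjTranspose_mul_mul_same _




lemma absorb {A B : Matrix n n ℂ} (hA : A * A = A)
    (hle : LinearMap.range B.mulVecLin ≤ LinearMap.range A.mulVecLin) : A * B = B := by
  apply mat_ext
  intro x
  have hmem : B *ᵥ x ∈ LinearMap.range A.mulVecLin := hle ⟨x, by simp [Matrix.mulVecLin_apply]⟩
  obtain ⟨y, hy⟩ := hmem
  rw [Matrix.mulVecLin_apply] at hy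
  have h2 : A *ᵥ (B *ᵥ x) = B *ᵥ x := by
    rw [← hy, Matrix.mulVec_mulVec, hA]
  rw [← Matrix.mulVec_mulVec] at *
  exact h2

lemma proj_unique {P Q : Matrix n n ℂ} (hP : P.IsHermitian) (hPP : P * P = P)
    (hQ : Q.IsHermitian) (hQQ : Q * Q = Q)
    (hr : LinearMap.range P.mulVecLin = LinearMap.range Q.mulVecLin) : P = Q := by
  have h1 : Q * P = P := absorb hQQ (le_of_eq hr)
  have h2 : P * Q = Q := absorb hPP (le_of_eq hr.symm)
  calc P = Pᴴ := hP.symm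
  _ = (Q * P)ᴴ := by rw [h1]
  _ = Pᴴ * Qᴴ := by rw [Matrix.conjTranspose_mul]
  _ = P * Q := by rw [hP.eq, hQ.eq]
  _ = Q := h2

lemma support_facts {ρ P : Matrix n n ℂ} (hρ : ρ.PosSemidef)
    (hPH : P.IsHermitian) (hPP : P * P = P)
    (hPr : LinearMap.range P.mulVecLin = LinearMap.range ρ.mulVecLin) :
    P * ρ = ρ ∧ ∃ c : ℝ, 0 ≤ c ∧ ((c:ℂ) • ρ - P).PosSemidef := by
  have hH := hρ.1
  set e := hH.eigenvalues with he
  set U : Matrix n n ℂ := (hH.eigenvectorUnitary : Matrix n n ℂ) with hUdef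
  have hspec : ρ = U * Matrix.diagonal (RCLike.ofReal ∘ e) * star U := hH.spectral_theorem
  have hUU : U * star U = 1 := (Matrix.mem_unitaryGroup_iff).mp hH.eigenvectorUnitary.2
  have hUU' : star U * U = 1 := (Matrix.mem_unitaryGroup_iff').mp hH.eigenvectorUnitary.2
  set ind : n → ℂ := fun i => if e i = 0 then 0 else 1 with hind
  set Q := U * Matrix.diagonal ind * star U with hQdef
  have hQpsd : Q.PosSemidef := by
    rw [hQdef, Matrix.star_eq_conjTranspose]
    refine Matrix.PosSemidef.mul_mul_conjTranspose_same ?_ U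
    exact Matrix.posSemidef_diagonal_iff.mpr fun i => by
      by_cases h : e i = 0 <;> simp [hind, h]
  have hQQ : Q * Q = Q := by
    rw [hQdef]
    rw [show U * Matrix.diagonal ind * star U * (U * Matrix.diagonal ind * star U)
        = U * Matrix.diagonal ind * (star U * U) * Matrix.diagonal ind * star U by
      simp only [mul_assoc]]
    rw [hUU', mul_one, mul_assoc U, Matrix.diagonal_mul_diagonal]
    congr 1
    congr 1
    rw [Matrix.diagonal_eq_diagonal_iff]
    intro i
    by_cases h : e i = 0 <;> simp [hind, h]
  have hQρ : Q * ρ = ρ := by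
    conv_lhs => rw [hQdef, hspec]
    conv_rhs => rw [hspec]
    rw [show U * Matrix.diagonal ind * star U * (U * Matrix.diagonal (RCLike.ofReal ∘ e) * star U)
        = U * Matrix.diagonal ind * (star U * U) * Matrix.diagonal (RCLike.ofReal ∘ e) * star U by
      simp only [mul_assoc]]
    rw [hUU', mul_one, mul_assoc U, Matrix.diagonal_mul_diagonal]
    congr 1
    congr 1
    rw [Matrix.diagonal_eq_diagonal_iff]
    intro i
    by_cases h : e i = 0 <;> simp [hind, h, Function.comp]
  have hρX : ρ * (U * Matrix.diagonal (fun i => if e i = 0 then 0 else ((e i : ℂ))⁻¹) * star U) = Q := by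
    conv_lhs => rw [hspec]
    rw [show U * Matrix.diagonal (RCLike.ofReal ∘ e) * star U *
          (U * Matrix.diagonal (fun i => if e i = 0 then 0 else ((e i : ℂ))⁻¹) * star U)
        = U * Matrix.diagonal (RCLike.ofReal ∘ e) * (star U * U) *
          Matrix.diagonal (fun i => if e i = 0 then 0 else ((e i : ℂ))⁻¹) * star U by
      simp only [mul_assoc]]
    rw [hUU', mul_one, mul_assoc U, Matrix.diagonal_mul_diagonal, hQdef]
    congr 1
    congr 1
    rw [Matrix.diagonal_eq_diagonal_iff]
    intro i
    by_cases h : e i = 0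
    · simp [hind, h]
    · have h5 : (e i : ℂ) ≠ 0 := by exact_mod_cast h
      simp [hind, h, Function.comp, mul_inv_cancel₀ h5]
  have hrange : LinearMap.range Q.mulVecLin = LinearMap.range ρ.mulVecLin := by
    apply le_antisymm
    · conv_lhs => rw [← hρX]
      rw [Matrix.mulVecLin_mul]
      exact LinearMap.range_comp_le_range _ _
    · conv_lhs => rw [← hQρ]
      rw [Matrix.mulVecLin_mul]
      exact LinearMap.range_comp_le_range _ _
  have hPQ : P = Q := proj_unique hPH hPP hQpsd.1 hQQ (hPr.trans hrange.symm)
  constructor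
  · rw [hPQ]; exact hQρ
  · refine ⟨∑ i, if e i = 0 then 0 else (e i)⁻¹, ?_, ?_⟩
    · exact Finset.sum_nonneg fun i _ => by
        by_cases h : e i = 0 <;> simp [h, inv_nonneg.mpr (hρ.eigenvalues_nonneg i)] <;> exact hρ.eigenvalues_nonneg i
    · set c : ℝ := ∑ i, if e i = 0 then 0 else (e i)⁻¹ with hc
      have hkey : (c:ℂ) • ρ - P
          = U * Matrix.diagonal (fun i => ((c * e i - (if e i = 0 then (0:ℝ) else 1) : ℝ) : ℂ)) * star U := by
        rw [hPQ, hQdef]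
        conv_lhs => rw [hspec]
        rw [show (c:ℂ) • (U * Matrix.diagonal (RCLike.ofReal ∘ e) * star U)
            = U * ((c:ℂ) • Matrix.diagonal (RCLike.ofReal ∘ e)) * star U by
          rw [mul_smul_comm, smul_mul_assoc]]
        rw [← Matrix.diagonal_smul, ← Matrix.sub_mul, ← Matrix.mul_sub]
        congr 1
        congr 1
        ext i j
        rcases eq_or_ne i j with rfl | hij
        · by_cases h : e i = 0 <;>
            simp [hind, h, Function.comp, Matrix.sub_apply, Matrix.diagonal_apply_eq,
              Pi.smul_apply, smul_eq_mul] <;> push_cast <;> ring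
        · simp [Matrix.sub_apply, Matrix.diagonal_apply_ne _ hij]
      rw [hkey, Matrix.star_eq_conjTranspose]
      refine Matrix.PosSemidef.mul_mul_conjTranspose_same ?_ U
      refine Matrix.posSemidef_diagonal_iff.mpr fun i => ?_
      rw [Complex.zero_le_real]
      by_cases h : e i = 0
      · simp [h]
      · have hpos : 0 < e i := lt_of_le_of_ne (hρ.eigenvalues_nonneg i) (Ne.symm h)
        have hcle : (e i)⁻¹ ≤ c := by
          rw [hc]
          refine Finset.single_le_sum (f := fun j => if e j = 0 then (0:ℝ) else (e j)⁻¹)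
            (fun j _ => ?_) (Finset.mem_univ i) |>.trans_eq' (by simp [h])
          by_cases hj : e j = 0 <;> simp [hj, inv_nonneg.mpr (hρ.eigenvalues_nonneg j)] <;> exact hρ.eigenvalues_nonneg j
        have : 1 ≤ c * e i := by
          calc (1:ℝ) = (e i)⁻¹ * e i := (inv_mul_cancel₀ (ne_of_gt hpos)).symm
          _ ≤ c * e i := by gcongr
        simp [h]
        linarith




noncomputable def toE (A : Matrix n n ℂ) : EuclideanSpace ℂ (n × n) :=
  (WithLp.equiv 2 _).symm (fun p => A p.2 p.1)

lemma toE_add (A B : Matrix n n ℂ) : toE (A + B) = toE A + toE B := by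
  ext p
  simp [toE]

lemma trace_fro (X : Matrix n n ℂ) : ‖toE X‖ ^ 2 = ((Xᴴ * X).trace).re := by
  rw [EuclideanSpace.norm_eq]
  rw [Real.sq_sqrt (by positivity)]
  rw [Matrix.trace, Complex.re_sum]
  rw [Fintype.sum_prod_type]
  apply Finset.sum_congr rfl
  intro i _
  simp only [Matrix.diag_apply, Matrix.mul_apply, Complex.re_sum]
  apply Finset.sum_congr rfl
  intro j _
  rw [show toE X (i, j) = X j i from rfl]
  rw [Matrix.conjTranspose_apply, Complex.mul_re]
  simp only [Complex.star_def, Complex.conj_re, Complex.conj_im,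
    Complex.sq_norm, Complex.normSq_apply]
  ring



lemma trace_sms {s σ : Matrix n n ℂ} (hss : s * s = σ) (M : Matrix n n ℂ) :
    (s * M * s).trace = (M * σ).trace := by
  rw [mul_assoc, Matrix.trace_mul_comm, mul_assoc, hss]

lemma key_bound {ρ σ P Λ : Matrix n n ℂ}
    (hρ : ρ.PosSemidef) (hρtr : ρ.trace = 1) (hσ : σ.PosSemidef) (hσtr : σ.trace = 1)
    (hPH : P.IsHermitian) (hPP : P * P = P) {c : ℝ} (hc : 0 ≤ c)
    (hcρ : ((c:ℂ) • ρ - P).PosSemidef)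
    (hΛ : Λ.PosSemidef) (hΛ1 : (1 - Λ).PosSemidef) {ε : ℝ}
    (hε : 0 ≤ ε) (hΛρ : 1 - ε ≤ ((Λ * ρ).trace).re) :
    ((P * σ).trace).re - 2 * Real.sqrt (((P * σ).trace).re) * (Real.sqrt c * Real.sqrt ε)
      ≤ ((Λ * σ).trace).re := by
  obtain ⟨s, hs, hss⟩ : ∃ s : Matrix n n ℂ, s.PosSemidef ∧ s * s = σ :=
    ⟨hσ.sqrt, hσ.posSemidef_sqrt, hσ.sqrt_mul_self⟩
  have hsH : sᴴ = s := hs.1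
  have h1P : (1 - P).PosSemidef := by
    have h := Matrix.posSemidef_conjTranspose_mul_self (1 - P)
    have he : (1 - P)ᴴ * (1 - P) = 1 - P := by
      rw [Matrix.conjTranspose_sub, Matrix.conjTranspose_one, hPH.eq]
      rw [Matrix.mul_sub, Matrix.sub_mul, Matrix.sub_mul, hPP]
      noncomm_ring
    rwa [he] at h
  set a : ℝ := ‖toE (P * Λ * s)‖ with hadef
  set b : ℝ := ‖toE (P * (1 - Λ) * s)‖ with hbdef
  set d : ℝ := ‖toE (P * s)‖ with hddef
  have ha0 : 0 ≤ a := norm_nonneg _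
  have hb0 : 0 ≤ b := norm_nonneg _
  have hd0 : 0 ≤ d := norm_nonneg _
  -- d² = Tr(Pσ).re
  have hd2 : d ^ 2 = ((P * σ).trace).re := by
    rw [hddef, trace_fro]
    congr 1
    rw [Matrix.conjTranspose_mul, hsH, hPH.eq]
    have e1 : s * P * (P * s) = s * P * s := by
      calc s * P * (P * s) = s * (P * P) * s := by noncomm_ring
      _ = s * P * s := by rw [hPP]
    rw [e1, trace_sms hss]
  -- a² ≤ Tr(Λσ).re
  have ha2 : a ^ 2 ≤ ((Λ * σ).trace).re := by
    have haeq : a ^ 2 = ((Λ * P * Λ * σ).trace).re := by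
      rw [hadef, trace_fro]
      congr 1
      rw [Matrix.conjTranspose_mul, Matrix.conjTranspose_mul, hsH, hPH.eq, hΛ.1.eq]
      have e1 : s * (Λ * P) * (P * Λ * s) = s * (Λ * P * Λ) * s := by
        calc s * (Λ * P) * (P * Λ * s) = s * (Λ * (P * P) * Λ) * s := by noncomm_ring
        _ = s * (Λ * P * Λ) * s := by rw [hPP]
      rw [e1, trace_sms hss]
    have hpsd : (Λ - Λ * P * Λ).PosSemidef := by
      have hA : (Λ * (1 - P) * Λ).PosSemidef := by
        have h := h1P.conjTranspose_mul_mul_same Λ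
        rwa [hΛ.1.eq] at h
      have hB := sub_sq_psd hΛ hΛ1
      have h := hA.add hB
      have heq : Λ * (1 - P) * Λ + (Λ - Λ * Λ) = Λ - Λ * P * Λ := by noncomm_ring
      rwa [heq] at h
    rw [haeq]
    exact trace_mul_mono hσ hpsd
  -- b² ≤ c ε
  have hb2 : b ^ 2 ≤ c * ε := by
    have hbeq : b ^ 2 = (((1 - Λ) * P * (1 - Λ) * σ).trace).re := by
      rw [hbdef, trace_fro]
      congr 1
      rw [Matrix.conjTranspose_mul, Matrix.conjTranspose_mul, hsH, hPH.eq, hΛ1.1.eq]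
      have e1 : s * ((1 - Λ) * P) * (P * (1 - Λ) * s) = s * ((1 - Λ) * P * (1 - Λ)) * s := by
        calc s * ((1 - Λ) * P) * (P * (1 - Λ) * s)
            = s * ((1 - Λ) * (P * P) * (1 - Λ)) * s := by noncomm_ring
        _ = _ := by rw [hPP]
      rw [e1, trace_sms hss]
    have hC : ((1 - Λ) * ρ * (1 - Λ)).PosSemidef := by
      have h := hρ.conjTranspose_mul_mul_same (1 - Λ)
      rwa [hΛ1.1.eq] at h
    have t1 : (((1 - Λ) * P * (1 - Λ) * σ).trace).re
        ≤ (((c:ℂ) • ((1 - Λ) * ρ * (1 - Λ)) * σ).trace).re := by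
      refine trace_mul_mono hσ ?_
      have h := hcρ.conjTranspose_mul_mul_same (1 - Λ)
      rw [hΛ1.1.eq] at h
      have heq : (1 - Λ) * ((c:ℂ) • ρ - P) * (1 - Λ)
          = (c:ℂ) • ((1 - Λ) * ρ * (1 - Λ)) - (1 - Λ) * P * (1 - Λ) := by
        simp only [Matrix.mul_sub, Matrix.sub_mul, mul_smul_comm, smul_mul_assoc,
          one_mul, mul_one, smul_sub]
        abel
      rwa [heq] at h
    have t2 : (((c:ℂ) • ((1 - Λ) * ρ * (1 - Λ)) * σ).trace).re
        = c * ((((1 - Λ) * ρ * (1 - Λ)) * σ).trace).re := by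
      rw [Matrix.smul_mul, Matrix.trace_smul]
      simp [Complex.mul_re]
    have t3 : ((((1 - Λ) * ρ * (1 - Λ)) * σ).trace).re
        ≤ (((1 - Λ) * ρ * (1 - Λ)).trace).re := by
      have h1σ := one_sub_psd hσ hσtr
      have h := trace_mul_mono hC h1σ
      rwa [one_mul, Matrix.trace_mul_comm] at h
    have t4 : (((1 - Λ) * ρ * (1 - Λ)).trace).re ≤ ε := by
      have e1 : ((1 - Λ) * ρ * (1 - Λ)).trace = ((1 - Λ) * (1 - Λ) * ρ).trace := by
        rw [Matrix.trace_mul_comm, mul_assoc]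
      have t5 : (((1 - Λ) * (1 - Λ) * ρ).trace).re ≤ (((1 - Λ) * ρ).trace).re := by
        refine trace_mul_mono hρ ?_
        have h' : (1 - (1 - Λ)).PosSemidef := by simpa [sub_sub_cancel] using hΛ
        exact sub_sq_psd hΛ1 h'
      have t6 : (((1 - Λ) * ρ).trace).re = 1 - ((Λ * ρ).trace).re := by
        rw [Matrix.sub_mul, one_mul, Matrix.trace_sub, Complex.sub_re, hρtr]
        norm_num
      rw [e1]
      rw [t6] at t5
      linarith
    calc b ^ 2 ≤ c * ((((1 - Λ) * ρ * (1 - Λ)) * σ).trace).re := by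
          rw [hbeq]; rw [t2] at t1; exact t1
    _ ≤ c * ε := by
        have := t3.trans t4
        exact mul_le_mul_of_nonneg_left this hc
  -- triangle
  have htri : d ≤ a + b := by
    have e1 : P * s = P * Λ * s + P * (1 - Λ) * s := by noncomm_ring
    rw [hddef, e1, toE_add]
    exact norm_add_le _ _
  -- real arithmetic
  have hdT : Real.sqrt (((P * σ).trace).re) = d := by
    rw [← hd2, Real.sqrt_sq hd0]
  set u : ℝ := Real.sqrt c * Real.sqrt ε with hudef
  have hu0 : 0 ≤ u := mul_nonneg (Real.sqrt_nonneg _) (Real.sqrt_nonneg _)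
  have hbu : b ≤ u := by
    have h1 : b = Real.sqrt (b ^ 2) := (Real.sqrt_sq hb0).symm
    rw [h1, hudef, ← Real.sqrt_mul hc]
    exact Real.sqrt_le_sqrt hb2
  rw [hdT, ← hd2]
  by_cases hdb : d ≤ b
  · nlinarith [mul_le_mul_of_nonneg_left hdb hd0, mul_le_mul_of_nonneg_left hbu hd0,
      sq_nonneg a, mul_nonneg hd0 hu0]
  · push_neg at hdb
    have hab : d - b ≤ a := by linarith
    have h2 : (d - b) ^ 2 ≤ a ^ 2 := by nlinarith
    nlinarith [mul_le_mul_of_nonneg_left hbu hd0, sq_nonneg b]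


end DminAux


theorem dminSmooth_tendsto_dmin {n : Type*} [Fintype n] [DecidableEq n]
    (ρ σ : Matrix n n ℂ) (hρ : IsDensity ρ) (hσ : IsDensity σ)
    (P : Matrix n n ℂ) (hP : IsSupportProj ρ P) :
    Filter.Tendsto (fun ε => DminSmooth ε ρ σ) (nhdsWithin 0 (Set.Ioi 0))
      (nhds (- Real.logb 2 (((P * σ).trace).re))) := by
  classical
  obtain ⟨hPH, hPP, hPr⟩ := hP
  obtain ⟨hρpsd, hρtr⟩ := hρ
  obtain ⟨hσpsd, hσtr⟩ := hσ
  obtain ⟨hPρ, c, hc0, hcρ⟩ := DminAux.support_facts hρpsd hPH hPP hPr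
  have hPpsd : P.PosSemidef := by
    have h := Matrix.posSemidef_conjTranspose_mul_self P
    rwa [hPH.eq, hPP] at h
  have h1Ppsd : (1 - P).PosSemidef := by
    have h := Matrix.posSemidef_conjTranspose_mul_self (1 - P)
    have he : (1 - P)ᴴ * (1 - P) = 1 - P := by
      rw [Matrix.conjTranspose_sub, Matrix.conjTranspose_one, hPH.eq,
        Matrix.mul_sub, Matrix.sub_mul, Matrix.sub_mul, hPP]
      noncomm_ring
    rwa [he] at h
  set T : ℝ := ((P * σ).trace).re with hTdef
  have hT0 : 0 ≤ T := DminAux.trace_mul_re_nonneg hPpsd hσpsd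
  set S : ℝ → Set ℝ := fun ε => {t : ℝ | ∃ Λ : Matrix n n ℂ, Λ.PosSemidef ∧
      (1 - Λ).PosSemidef ∧ 1 - ε ≤ ((Λ * ρ).trace).re ∧ t = ((Λ * σ).trace).re} with hSdef
  have hfun : (fun ε => DminSmooth ε ρ σ) = fun ε => - Real.logb 2 (sInf (S ε)) := rfl
  have hmem : ∀ ε : ℝ, 0 ≤ ε → T ∈ S ε := by
    intro ε hε
    refine ⟨P, hPpsd, h1Ppsd, ?_, rfl⟩
    rw [hPρ, hρtr, Complex.one_re]
    linarith
  have hnonneg : ∀ ε : ℝ, ∀ t ∈ S ε, 0 ≤ t := by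
    rintro ε t ⟨Λ, hΛ, -, -, rfl⟩
    exact DminAux.trace_mul_re_nonneg hΛ hσpsd
  have hbdd : ∀ ε : ℝ, BddBelow (S ε) := fun ε => ⟨0, fun t ht => hnonneg ε t ht⟩
  have hinf_le : ∀ ε : ℝ, 0 ≤ ε → sInf (S ε) ≤ T := fun ε hε => csInf_le (hbdd ε) (hmem ε hε)
  have hinf_ge0 : ∀ ε : ℝ, 0 ≤ ε → 0 ≤ sInf (S ε) := fun ε hε =>
    le_csInf ⟨T, hmem ε hε⟩ (hnonneg ε)
  have hlow : ∀ ε : ℝ, 0 ≤ ε →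
      T - 2 * Real.sqrt T * (Real.sqrt c * Real.sqrt ε) ≤ sInf (S ε) := by
    intro ε hε
    refine le_csInf ⟨T, hmem ε hε⟩ ?_
    rintro t ⟨Λ, hΛ, hΛ1, hΛρ, rfl⟩
    exact DminAux.key_bound hρpsd hρtr hσpsd hσtr hPH hPP hc0 hcρ hΛ hΛ1 hε hΛρ
  rw [hfun]
  rcases eq_or_lt_of_le hT0 with hT | hT
  · -- T = 0 : the infimum is identically 0 on Ioi 0
    have hzero : ∀ ε ∈ Set.Ioi (0:ℝ),
        - Real.logb 2 (T : ℝ) = - Real.logb 2 (sInf (S ε)) := by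
      intro ε hε
      have h3 : sInf (S ε) = T :=
        le_antisymm (hinf_le ε (le_of_lt hε)) (by rw [← hT]; exact hinf_ge0 ε (le_of_lt hε))
      rw [h3]
    exact Filter.Tendsto.congr'
      (Filter.eventuallyEq_of_mem self_mem_nhdsWithin hzero) tendsto_const_nhds
  · -- T > 0
    have hsq : Filter.Tendsto (fun ε : ℝ => sInf (S ε)) (nhdsWithin 0 (Set.Ioi 0)) (nhds T) := by
      have h1 : Filter.Tendsto (fun ε : ℝ => Real.sqrt ε)
          (nhdsWithin 0 (Set.Ioi 0)) (nhds 0) := by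
        have h := Real.continuous_sqrt.tendsto 0
        rw [Real.sqrt_zero] at h
        exact h.mono_left nhdsWithin_le_nhds
      have h2 : Filter.Tendsto (fun ε : ℝ => 2 * Real.sqrt T * (Real.sqrt c * Real.sqrt ε))
          (nhdsWithin 0 (Set.Ioi 0)) (nhds 0) := by
        have h := (h1.const_mul (Real.sqrt c)).const_mul (2 * Real.sqrt T)
        simpa using h
      have hltend : Filter.Tendsto
          (fun ε : ℝ => T - 2 * Real.sqrt T * (Real.sqrt c * Real.sqrt ε))
          (nhdsWithin 0 (Set.Ioi 0)) (nhds T) := by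
        have h := (tendsto_const_nhds (x := T) (f := nhdsWithin (0:ℝ) (Set.Ioi 0))).sub h2
        simpa using h
      refine tendsto_of_tendsto_of_tendsto_of_le_of_le' hltend tendsto_const_nhds ?_ ?_
      · filter_upwards [self_mem_nhdsWithin] with ε hε
        exact hlow ε (le_of_lt hε)
      · filter_upwards [self_mem_nhdsWithin] with ε hε
        exact hinf_le ε (le_of_lt hε)
    have hcont : ContinuousAt (fun x : ℝ => - Real.logb 2 x) T := by
      have h := (Real.continuousAt_log (ne_of_gt hT)).div_const (Real.log 2)
      have heq : (fun x : ℝ => Real.log x / Real.log 2) = fun x : ℝ => Real.logb 2 x := by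
        funext x
        rw [Real.log_div_log]
      rw [heq] at h
      exact h.neg
    exact hcont.tendsto.comp hsq
end

section
/- (Exact distinguishability cost equals D_max) Let ρ, σ be density matrices with ρ ≤ 2^λ σ for some finite λ > 0. Then ω := (2^λ σ − ρ)/(2^λ − 1) is a density matrix, and the channel P(τ) := ⟨0|τ|0⟩ρ + ⟨1|τ|1⟩ω satisfies P(|0⟩⟨0|) = ρ and P(π_{2^λ}) = σ, where π_{2^λ} := 2^{-λ}|0⟩⟨0| + (1 − 2^{-λ})|1⟩⟨1|. Conversely, any channel P with P(|0⟩⟨0|) = ρ and P(π_M) = σ satisfies log₂ M ≥ D_max(ρ‖σ). -/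
open Matrix
open scoped BigOperators ComplexOrder

lemma realSmul_matrix_eq {n : Type*} [Fintype n] (c : ℝ) (A : Matrix n n ℂ) :
    c • A = (c : ℂ) • A := by
  ext i j
  simp [Matrix.smul_apply, Complex.real_smul]

lemma posSemidef_csmul {n : Type*} [Fintype n] {A : Matrix n n ℂ} (hA : A.PosSemidef)
    {c : ℝ} (hc : 0 ≤ c) : ((c : ℂ) • A).PosSemidef := by
  constructor
  · unfold Matrix.IsHermitian
    rw [Matrix.conjTranspose_smul, hA.1.eq]
    simp [Complex.conj_ofReal]
  · intro x
    exact (hA.smul (a := (c : ℂ)) (by exact_mod_cast hc)).2 x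

theorem exact_distinguishability_cost {n : Type*} [Fintype n] [DecidableEq n]
    (ρ σ : Matrix n n ℂ) (hρ : IsDensity ρ) (hσ : IsDensity σ)
    (l : ℝ) (hl : 0 < l) (h : (((2:ℝ)^l) • σ - ρ).PosSemidef) :
    (IsDensity ((((2:ℝ)^l - 1)⁻¹) • (((2:ℝ)^l) • σ - ρ))
      ∧ (e00 0 0) • ρ + (e00 1 1) • ((((2:ℝ)^l - 1)⁻¹) • (((2:ℝ)^l) • σ - ρ)) = ρ
      ∧ (piM ((2:ℝ)^l) 0 0) • ρ
          + (piM ((2:ℝ)^l) 1 1) • ((((2:ℝ)^l - 1)⁻¹) • (((2:ℝ)^l) • σ - ρ)) = σ)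
    ∧ ∀ (M : ℝ), 1 ≤ M → ∀ P : Matrix (Fin 2) (Fin 2) ℂ →ₗ[ℂ] Matrix n n ℂ,
        IsCPTP P → P e00 = ρ → P (piM M) = σ →
        Dmax ρ σ ≤ ((Real.logb 2 M : ℝ) : EReal) := by
  have hM1 : (1:ℝ) < (2:ℝ)^l := by
    calc (1:ℝ) = (2:ℝ)^(0:ℝ) := by rw [Real.rpow_zero]
    _ < (2:ℝ)^l := by
        exact (Real.rpow_lt_rpow_left_iff (by norm_num : (1:ℝ) < 2)).mpr hl
  set M : ℝ := (2:ℝ)^l with hMdef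
  have hMne : (M:ℂ) ≠ 0 := by
    simp only [ne_eq, Complex.ofReal_eq_zero]
    linarith
  have hM1ne : (M:ℂ) - 1 ≠ 0 := by
    intro hcon
    have : (M:ℂ) = 1 := by linear_combination hcon
    rw [Complex.ofReal_eq_one] at this
    linarith
  constructor
  · refine ⟨⟨?_, ?_⟩, ?_, ?_⟩
    · rw [realSmul_matrix_eq]
      exact posSemidef_csmul h (by rw [inv_nonneg]; linarith)
    · rw [realSmul_matrix_eq, realSmul_matrix_eq, Matrix.trace_smul, Matrix.trace_sub,
        Matrix.trace_smul, hρ.2, hσ.2, smul_eq_mul, smul_eq_mul]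
      rw [mul_one]
      field_simp
      push_cast
      field_simp
    · have h0 : e00 0 0 = 1 := by simp [e00]
      have h1 : e00 1 1 = 0 := by simp [e00]
      rw [h0, h1, one_smul, zero_smul, add_zero]
    · have h0 : piM M 0 0 = ((M⁻¹ : ℝ) : ℂ) := by
        simp [piM, e00, e11, Matrix.smul_apply, Complex.real_smul]
      have h1 : piM M 1 1 = ((1 - M⁻¹ : ℝ) : ℂ) := by
        simp [piM, e00, e11, Matrix.smul_apply, Complex.real_smul]
      rw [h0, h1]
      ext i j
      simp only [Matrix.add_apply, Matrix.smul_apply, Matrix.sub_apply, smul_eq_mul,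
        Complex.real_smul]
      push_cast
      field_simp
      ring
  · intro M' hM' P hCPTP hP0 hPpi
    apply sInf_le
    refine ⟨Real.logb 2 M', Real.logb_nonneg (by norm_num) hM', ?_, rfl⟩
    have hM'pos : (0:ℝ) < M' := by linarith
    have hM'ne : (M':ℂ) ≠ 0 := by
      simp only [ne_eq, Complex.ofReal_eq_zero]; linarith
    rw [Real.rpow_logb (by norm_num) (by norm_num) hM'pos]
    have he11 : (P e11).PosSemidef := by
      have hsub := hCPTP.1.submatrix (fun p : n => ((1 : Fin 2), p))
      have heq : P e11 = (Matrix.of (fun (p q : (Fin 2) × n) =>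
          P (Matrix.single p.1 q.1 1) p.2 q.2)).submatrix
          (fun p : n => ((1 : Fin 2), p)) (fun p : n => ((1 : Fin 2), p)) := by
        ext p q
        simp [Matrix.submatrix, e11]
      rw [heq]
      exact hsub
    have hkey : (M':ℂ) • piM M' - e00 = ((M':ℂ) - 1) • e11 := by
      ext i j
      fin_cases i <;> fin_cases j <;>
        simp [piM, e00, e11, Matrix.smul_apply, Complex.real_smul,
          Matrix.single, Matrix.add_apply] <;>
        field_simp <;>
        norm_num
    have hfinal : M' • σ - ρ = ((M':ℂ) - 1) • P e11 := by
      rw [← hP0, ← hPpi, realSmul_matrix_eq, ← P.map_smul, ← P.map_sub, ← P.map_smul, hkey]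
    rw [hfinal]
    have : ((M':ℂ) - 1) = (((M' - 1 : ℝ)) : ℂ) := by push_cast; ring
    rw [this]
    exact posSemidef_csmul he11 (by linarith)
end

section
/- (Exact distillable distinguishability equals D_min) Let ρ, σ be density matrices with Tr[Π_ρ σ] ≠ 0. The measurement channel M(ω) := Tr[Π_ρ ω]|0⟩⟨0| + Tr[(I − Π_ρ)ω]|1⟩⟨1| satisfies M(ρ) = |0⟩⟨0| and M(σ) = π_{1/Tr[Π_ρ σ]}. Conversely, any channel P with P(ρ) = |0⟩⟨0| and P(σ) = π_M satisfies log₂ M ≤ D_min(ρ‖σ) = −log₂ Tr[Π_ρ σ]. -/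
open Matrix
open scoped BigOperators ComplexOrder

namespace EDDaux

variable {n : Type*} [Fintype n] [DecidableEq n]

lemma trace_ct_mul_self_eq_zero {m k : Type*} [Fintype m] [Fintype k] {X : Matrix m k ℂ}
    (h : (Xᴴ * X).trace = 0) : X = 0 := by
  have h' : ∑ j, ∑ i, star (X i j) * X i j = 0 := by
    simpa [Matrix.trace, Matrix.mul_apply, Matrix.diag, Matrix.conjTranspose_apply] using h
  ext i j
  have hnn : ∀ j ∈ Finset.univ, (0:ℂ) ≤ ∑ i, star (X i j) * X i j :=
    fun j _ => Finset.sum_nonneg fun i _ => star_mul_self_nonneg _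
  have hcol := (Finset.sum_eq_zero_iff_of_nonneg hnn).mp h' j (Finset.mem_univ j)
  have hv : (fun i => X i j) = 0 := by
    have : star (fun i => X i j) ⬝ᵥ (fun i => X i j) = 0 := by
      simpa [dotProduct] using hcol
    exact dotProduct_star_self_eq_zero.mp this
  simpa using congrFun hv i

lemma psd_trace_nonneg {A : Matrix n n ℂ} (hA : A.PosSemidef) : 0 ≤ A.trace := by
  apply Finset.sum_nonneg
  intro i _
  have := hA.dotProduct_mulVec_nonneg (Pi.single i 1)
  simpa [dotProduct, Pi.single_apply] using this

open scoped MatrixOrder in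
lemma psd_exists_sqrt {A : Matrix n n ℂ} (hA : A.PosSemidef) :
    ∃ S : Matrix n n ℂ, S.PosSemidef ∧ S * S = A :=
  ⟨CFC.sqrt A, (CFC.sqrt_nonneg A).posSemidef, CFC.sqrt_mul_sqrt_self A hA.nonneg⟩

lemma psd_trace_mul_nonneg {A B : Matrix n n ℂ} (hA : A.PosSemidef) (hB : B.PosSemidef) :
    0 ≤ (A * B).trace := by
  obtain ⟨SA, hs, hSA⟩ := psd_exists_sqrt hA
  have h1 : A * B = SA * (SA * B) := by rw [← mul_assoc, hSA]
  rw [h1, trace_mul_comm]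
  have hpsd : (SA * B * SAᴴ).PosSemidef := hB.mul_mul_conjTranspose_same SA
  rw [hs.1] at hpsd
  exact psd_trace_nonneg hpsd

lemma psd_mul_eq_zero {A B : Matrix n n ℂ} (hA : A.PosSemidef) (hB : B.PosSemidef)
    (h : (A * B).trace = 0) : A * B = 0 := by
  obtain ⟨SA, hsA, hSA⟩ := psd_exists_sqrt hA
  obtain ⟨SB, hsB, hSB⟩ := psd_exists_sqrt hB
  have hAh : SAᴴ = SA := hsA.1
  have hBh : SBᴴ = SB := hsB.1
  have hX : (SB * SA)ᴴ * (SB * SA) = SA * B * SA := by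
    rw [conjTranspose_mul, hAh, hBh, mul_assoc, ← mul_assoc SB, hSB,
      ← mul_assoc]
  have htr : ((SB * SA)ᴴ * (SB * SA)).trace = 0 := by
    rw [hX, trace_mul_comm, ← mul_assoc, hSA]
    exact h
  have hz : SB * SA = 0 := trace_ct_mul_self_eq_zero htr
  have hBA : B * A = 0 := by
    have e : SB * (SB * SA) * SA = B * A := by
      rw [← mul_assoc, hSB, mul_assoc, hSA]
    rw [← e, hz, mul_zero, zero_mul]
  have hct : (B * A)ᴴ = A * B := by rw [conjTranspose_mul, hA.1, hB.1]
  rw [← hct, hBA, conjTranspose_zero]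

lemma mul_eq_mul_of_range {A B C D : Matrix n n ℂ}
    (h : A * C = B * C)
    (hr : LinearMap.range D.mulVecLin ≤ LinearMap.range C.mulVecLin) :
    A * D = B * D := by
  ext i j
  have hmem : D *ᵥ Pi.single j 1 ∈ LinearMap.range C.mulVecLin :=
    hr ⟨Pi.single j 1, rfl⟩
  obtain ⟨w, hw⟩ := hmem
  have hw' : C *ᵥ w = D *ᵥ Pi.single j 1 := hw
  have hA : (A * D) *ᵥ Pi.single j 1 = (B * D) *ᵥ Pi.single j 1 := by
    rw [← Matrix.mulVec_mulVec, ← Matrix.mulVec_mulVec, ← hw',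
      Matrix.mulVec_mulVec, Matrix.mulVec_mulVec, h]
  have := congrFun hA i
  simpa using this

lemma e00_herm : e00ᴴ = e00 := by
  ext i j
  simp [e00, Matrix.single, Matrix.conjTranspose_apply, apply_ite, and_comm]

lemma e11_herm : e11ᴴ = e11 := by
  ext i j
  simp [e11, Matrix.single, Matrix.conjTranspose_apply, apply_ite, and_comm]

lemma e00_mul_e00 : e00 * e00 = e00 := by
  rw [e00, Matrix.single_mul_single_same, one_mul]

lemma e11_mul_e11 : e11 * e11 = e11 := by
  rw [e11, Matrix.single_mul_single_same, one_mul]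

lemma e00_mul_e11 : e00 * e11 = 0 := by
  rw [e00, e11, Matrix.single_mul_single_of_ne]
  decide

lemma trace_e00 : e00.trace = 1 := by
  simp [e00, Matrix.trace, Matrix.diag, Matrix.single, Fin.sum_univ_two]

lemma one_sub_e00 : (1 : Matrix (Fin 2) (Fin 2) ℂ) - e00 = e11 := by
  ext i j
  fin_cases i <;> fin_cases j <;>
    simp [e00, e11, Matrix.single, Matrix.one_apply]

lemma e00_psd : e00.PosSemidef := by
  have h : e00ᴴ * e00 = e00 := by rw [e00_herm, e00_mul_e00]
  exact h ▸ Matrix.posSemidef_conjTranspose_mul_self e00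

lemma e11_psd : e11.PosSemidef := by
  have h : e11ᴴ * e11 = e11 := by rw [e11_herm, e11_mul_e11]
  exact h ▸ Matrix.posSemidef_conjTranspose_mul_self e11

private lemma sum4_swap {M ι κ : Type*} [AddCommMonoid M] [Fintype ι] [Fintype κ]
    (f : ι → κ → ι → κ → M) :
    ∑ r : κ, ∑ s : κ, ∑ p : ι, ∑ q : ι, f p r q s
      = ∑ p : ι, ∑ r : κ, ∑ q : ι, ∑ s : κ, f p r q s := by
  calc ∑ r : κ, ∑ s : κ, ∑ p : ι, ∑ q : ι, f p r q s
      = ∑ r : κ, ∑ p : ι, ∑ s : κ, ∑ q : ι, f p r q s :=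
        Finset.sum_congr rfl fun r _ => Finset.sum_comm
    _ = ∑ p : ι, ∑ r : κ, ∑ s : κ, ∑ q : ι, f p r q s := Finset.sum_comm
    _ = ∑ p : ι, ∑ r : κ, ∑ q : ι, ∑ s : κ, f p r q s :=
        Finset.sum_congr rfl fun p _ => Finset.sum_congr rfl fun r _ => Finset.sum_comm

lemma vecMulVec_eq_sum (x : n → ℂ) :
    vecMulVec x (star x) = ∑ p, ∑ q, (x p * star (x q)) • Matrix.single p q (1:ℂ) := by
  ext i j
  simp [vecMulVec_apply, Matrix.sum_apply, Matrix.single, mul_ite, ite_and,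
    Finset.sum_ite_eq, Finset.sum_ite_eq']

lemma quad_eq_trace (A : Matrix n n ℂ) (x : n → ℂ) :
    star x ⬝ᵥ A *ᵥ x = (A * vecMulVec x (star x)).trace := by
  calc star x ⬝ᵥ A *ᵥ x = ∑ i, ∑ j, star (x i) * (A i j * x j) := by
        simp only [dotProduct, mulVec, Finset.mul_sum, Pi.star_apply]
    _ = (A * vecMulVec x (star x)).trace := by
        simp only [Matrix.trace, Matrix.diag, Matrix.mul_apply, vecMulVec_apply, Pi.star_apply]
        exact Finset.sum_congr rfl fun i _ => Finset.sum_congr rfl fun j _ => by ring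

variable (Q : Matrix n n ℂ →ₗ[ℂ] Matrix (Fin 2) (Fin 2) ℂ)

lemma Q_vecMulVec (x : n → ℂ) (r s : Fin 2) :
    Q (vecMulVec x (star x)) r s
      = ∑ p, ∑ q, (x p * star (x q)) * Q (Matrix.single p q 1) r s := by
  rw [vecMulVec_eq_sum, map_sum]
  simp only [map_sum, _root_.map_smul, Matrix.sum_apply, Matrix.smul_apply, smul_eq_mul]

lemma choi_entry_star (hQ : IsCPTP Q) (p q : n) (r s : Fin 2) :
    star (Q (Matrix.single p q 1) r s) = Q (Matrix.single q p 1) s r := by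
  have hC := hQ.1.1
  have := hC.apply (q, s) (p, r)
  simpa [Matrix.of_apply] using this

lemma Q_rankone_psd (hQ : IsCPTP Q) (x : n → ℂ) :
    (Q (vecMulVec x (star x))).PosSemidef := by
  refine Matrix.PosSemidef.of_dotProduct_mulVec_nonneg ?_ ?_
  · ext r s
    rw [Matrix.conjTranspose_apply, Q_vecMulVec, Q_vecMulVec]
    calc star (∑ p, ∑ q, (x p * star (x q)) * Q (Matrix.single p q 1) s r)
        = ∑ p, ∑ q, (star (x p) * x q) * Q (Matrix.single q p 1) r s := by
          simp only [star_sum, star_mul', star_star]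
          exact Finset.sum_congr rfl fun p _ => Finset.sum_congr rfl fun q _ => by
            rw [choi_entry_star Q hQ]
      _ = ∑ q, ∑ p, (star (x p) * x q) * Q (Matrix.single q p 1) r s :=
          Finset.sum_comm
      _ = ∑ p, ∑ q, (x p * star (x q)) * Q (Matrix.single p q 1) r s :=
          Finset.sum_congr rfl fun q _ => Finset.sum_congr rfl fun p _ => by ring_nf
  · intro v
    obtain ⟨hC, _⟩ := hQ
    set u : n × Fin 2 → ℂ := fun pr => star (x pr.1) * v pr.2 with hu
    have h0 := hC.dotProduct_mulVec_nonneg u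
    have lhs_eq : star v ⬝ᵥ (Q (vecMulVec x (star x))) *ᵥ v
        = ∑ p, ∑ r, ∑ q, ∑ s, star (u (p,r)) *
            (Q (Matrix.single p q 1) r s * u (q,s)) := by
      calc star v ⬝ᵥ (Q (vecMulVec x (star x))) *ᵥ v
          = ∑ r, ∑ s, star (v r) * (Q (vecMulVec x (star x)) r s * v s) := by
            simp only [dotProduct, mulVec, Finset.mul_sum, Pi.star_apply]
        _ = ∑ r, ∑ s, ∑ p, ∑ q, star (u (p,r)) *
              (Q (Matrix.single p q 1) r s * u (q,s)) := by
            refine Finset.sum_congr rfl fun r _ => Finset.sum_congr rfl fun s _ => ?_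
            rw [Q_vecMulVec, Finset.sum_mul, Finset.mul_sum]
            refine Finset.sum_congr rfl fun p _ => ?_
            rw [Finset.sum_mul, Finset.mul_sum]
            refine Finset.sum_congr rfl fun q _ => ?_
            simp only [hu, star_mul', star_star]
            ring
        _ = ∑ p, ∑ r, ∑ q, ∑ s, star (u (p,r)) *
              (Q (Matrix.single p q 1) r s * u (q,s)) :=
            sum4_swap _
    have rhs_eq : star u ⬝ᵥ (Matrix.of (fun (p q : n × Fin 2) =>
          Q (Matrix.single p.1 q.1 1) p.2 q.2)) *ᵥ u
        = ∑ p, ∑ r, ∑ q, ∑ s, star (u (p,r)) *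
            (Q (Matrix.single p q 1) r s * u (q,s)) := by
      simp only [dotProduct, mulVec, Matrix.of_apply, Pi.star_apply, Finset.mul_sum,
        Fintype.sum_prod_type]
    rw [lhs_eq, ← rhs_eq]
    exact h0

/-- Hilbert–Schmidt adjoint of `Q` applied to `e00`. -/
noncomputable def adjE (Q : Matrix n n ℂ →ₗ[ℂ] Matrix (Fin 2) (Fin 2) ℂ) : Matrix n n ℂ :=
  Matrix.of fun i j => (e00 * Q (Matrix.single j i 1)).trace

lemma adjE_trace (A : Matrix n n ℂ) : ((adjE Q) * A).trace = (e00 * Q A).trace := by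
  have hA : Q A = ∑ p, ∑ q, A p q • Q (Matrix.single p q 1) := by
    conv_lhs => rw [Matrix.matrix_eq_sum_single A]
    rw [map_sum]
    refine Finset.sum_congr rfl fun p _ => ?_
    rw [map_sum]
    refine Finset.sum_congr rfl fun q _ => ?_
    rw [show Matrix.single p q (A p q) = A p q • Matrix.single p q 1 by
      rw [Matrix.smul_single, smul_eq_mul, mul_one], _root_.map_smul]
  calc ((adjE Q) * A).trace
      = ∑ i, ∑ k, (e00 * Q (Matrix.single k i 1)).trace * A k i := by
        simp only [Matrix.trace, Matrix.diag, Matrix.mul_apply, adjE, Matrix.of_apply]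
    _ = ∑ k, ∑ i, (e00 * Q (Matrix.single k i 1)).trace * A k i := Finset.sum_comm
    _ = (e00 * Q A).trace := by
        rw [hA]
        simp only [Matrix.mul_sum, Matrix.trace_sum, Matrix.mul_smul, Matrix.trace_smul,
          smul_eq_mul]
        exact Finset.sum_congr rfl fun p _ => Finset.sum_congr rfl fun q _ => mul_comm _ _

lemma Q_std_ct (hQ : IsCPTP Q) (p q : n) :
    (Q (Matrix.single p q 1))ᴴ = Q (Matrix.single q p 1) := by
  ext r s
  rw [Matrix.conjTranspose_apply, choi_entry_star Q hQ]

lemma adjE_herm (hQ : IsCPTP Q) : (adjE Q).IsHermitian := by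
  ext i j
  rw [Matrix.conjTranspose_apply]
  show star (adjE Q j i) = adjE Q i j
  calc star ((e00 * Q (Matrix.single i j 1)).trace)
      = ((e00 * Q (Matrix.single i j 1))ᴴ).trace := (Matrix.trace_conjTranspose _).symm
    _ = (Q (Matrix.single j i 1) * e00).trace := by
        rw [conjTranspose_mul, Q_std_ct Q hQ, e00_herm]
    _ = (e00 * Q (Matrix.single j i 1)).trace := trace_mul_comm _ _

lemma adjE_psd (hQ : IsCPTP Q) : (adjE Q).PosSemidef :=
  Matrix.PosSemidef.of_dotProduct_mulVec_nonneg (adjE_herm Q hQ) fun x => by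
    rw [quad_eq_trace, adjE_trace]
    exact psd_trace_mul_nonneg e00_psd (Q_rankone_psd Q hQ x)

lemma one_sub_adjE_psd (hQ : IsCPTP Q) : ((1 : Matrix n n ℂ) - adjE Q).PosSemidef := by
  refine Matrix.PosSemidef.of_dotProduct_mulVec_nonneg
    (Matrix.isHermitian_one.sub (adjE_herm Q hQ)) fun x => ?_
  rw [quad_eq_trace, sub_mul, one_mul, Matrix.trace_sub, adjE_trace]
  have hTP := hQ.2 (vecMulVec x (star x))
  rw [← hTP]
  have h2 : (Q (vecMulVec x (star x))).trace - (e00 * Q (vecMulVec x (star x))).trace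
      = ((1 - e00) * Q (vecMulVec x (star x))).trace := by
    rw [sub_mul, one_mul, Matrix.trace_sub]
  rw [h2, one_sub_e00]
  exact psd_trace_mul_nonneg e11_psd (Q_rankone_psd Q hQ x)

end EDDaux

theorem exact_distillable_distinguishability {n : Type*} [Fintype n] [DecidableEq n]
    (ρ σ : Matrix n n ℂ) (hρ : IsDensity ρ) (hσ : IsDensity σ)
    (P : Matrix n n ℂ) (hP : IsSupportProj ρ P)
    (hne : ((P * σ).trace).re ≠ 0) :
    (((P * ρ).trace) • e00 + (((1 - P) * ρ).trace) • e11 = e00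
      ∧ ((P * σ).trace) • e00 + (((1 - P) * σ).trace) • e11
          = piM (1 / ((P * σ).trace).re))
    ∧ ∀ (M : ℝ), 1 ≤ M → ∀ Q : Matrix n n ℂ →ₗ[ℂ] Matrix (Fin 2) (Fin 2) ℂ,
        IsCPTP Q → Q ρ = e00 → Q σ = piM M →
        Real.logb 2 M ≤ - Real.logb 2 (((P * σ).trace).re) := by
  obtain ⟨hρpsd, hρtr⟩ := hρ
  obtain ⟨hσpsd, hσtr⟩ := hσ
  obtain ⟨hPh, hPP, hPrange⟩ := hP
  have hPρ : P * ρ = ρ := by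
    have h1 : P * P = (1 : Matrix n n ℂ) * P := by rw [one_mul]; exact hPP
    have := EDDaux.mul_eq_mul_of_range h1 (le_of_eq hPrange.symm)
    simpa using this
  have hPpsd : P.PosSemidef := by
    have h : Pᴴ * P = P := by rw [hPh.eq]; exact hPP
    exact h ▸ Matrix.posSemidef_conjTranspose_mul_self P
  have hconj : (starRingEnd ℂ) ((P * σ).trace) = (P * σ).trace := by
    have h : ((P * σ)ᴴ).trace = (P * σ).trace := by
      rw [conjTranspose_mul, hPh.eq, hσpsd.1.eq, trace_mul_comm]
    rw [Matrix.trace_conjTranspose] at h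
    exact h
  have htc : (P * σ).trace = (((P * σ).trace).re : ℂ) :=
    (Complex.conj_eq_iff_re.mp hconj).symm
  set t : ℝ := ((P * σ).trace).re with htdef
  have ht0 : 0 < t := by
    have hnn : (0:ℂ) ≤ (P * σ).trace := EDDaux.psd_trace_mul_nonneg hPpsd hσpsd
    have := (Complex.le_def.mp hnn).1
    simp only [Complex.zero_re] at this
    exact lt_of_le_of_ne this (Ne.symm hne)
  refine ⟨⟨?_, ?_⟩, ?_⟩
  · rw [hPρ, hρtr, sub_mul, one_mul, hPρ, sub_self, Matrix.trace_zero]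
    simp
  · rw [sub_mul, one_mul, Matrix.trace_sub, hσtr, htc, piM, one_div, inv_inv]
    ext i j
    simp only [Matrix.add_apply, Matrix.smul_apply, Complex.real_smul, smul_eq_mul]
    push_cast
    ring
  · intro M hM Q hQcptp hQρ hQσ
    have hΛherm := EDDaux.adjE_herm Q hQcptp
    have hΛpsd := EDDaux.adjE_psd Q hQcptp
    have h1Λpsd := EDDaux.one_sub_adjE_psd Q hQcptp
    have hΛρ : EDDaux.adjE Q * ρ = ρ := by
      have htr0 : ((1 - EDDaux.adjE Q) * ρ).trace = 0 := by
        rw [sub_mul, one_mul, Matrix.trace_sub, EDDaux.adjE_trace, hQρ,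
          EDDaux.e00_mul_e00, EDDaux.trace_e00, hρtr, sub_self]
      have hz := EDDaux.psd_mul_eq_zero h1Λpsd hρpsd htr0
      rw [sub_mul, one_mul] at hz
      exact (sub_eq_zero.mp hz).symm
    have hΛP : EDDaux.adjE Q * P = P := by
      have h1 : EDDaux.adjE Q * ρ = (1 : Matrix n n ℂ) * ρ := by rw [one_mul, hΛρ]
      have := EDDaux.mul_eq_mul_of_range h1 (le_of_eq hPrange)
      simpa using this
    have hPΛ : P * EDDaux.adjE Q = P := by
      have h := congrArg Matrix.conjTranspose hΛP
      rwa [conjTranspose_mul, hΛherm.eq, hPh.eq] at h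
    have hdiff : EDDaux.adjE Q - P = (1 - P) * EDDaux.adjE Q * (1 - P) := by
      have e1 : (1 - P) * EDDaux.adjE Q = EDDaux.adjE Q - P := by
        rw [sub_mul, one_mul, hPΛ]
      have e2 : (EDDaux.adjE Q - P) * (1 - P) = EDDaux.adjE Q - P := by
        rw [mul_sub, mul_one, sub_mul, hΛP, hPP, sub_self, sub_zero]
      rw [e1, e2]
    have hΛPpsd : (EDDaux.adjE Q - P).PosSemidef := by
      rw [hdiff]
      have h1Ph : ((1:Matrix n n ℂ) - P)ᴴ = 1 - P := (Matrix.isHermitian_one.sub hPh).eq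
      have h := hΛpsd.mul_mul_conjTranspose_same (1 - P)
      rwa [h1Ph] at h
    have hineq : (0:ℂ) ≤ ((EDDaux.adjE Q - P) * σ).trace :=
      EDDaux.psd_trace_mul_nonneg hΛPpsd hσpsd
    have hΛσ : (EDDaux.adjE Q * σ).trace = ((M⁻¹ : ℝ) : ℂ) := by
      rw [EDDaux.adjE_trace, hQσ, piM, Matrix.mul_add, Matrix.mul_smul, Matrix.mul_smul,
        EDDaux.e00_mul_e00, EDDaux.e00_mul_e11]
      simp [EDDaux.trace_e00]
    have hle : t ≤ M⁻¹ := by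
      have heq : ((EDDaux.adjE Q - P) * σ).trace = ((M⁻¹ : ℝ) : ℂ) - ((t : ℝ) : ℂ) := by
        rw [sub_mul, Matrix.trace_sub, hΛσ, ← htc]
      rw [heq] at hineq
      have h := (Complex.le_def.mp hineq).1
      simp only [Complex.zero_re, Complex.sub_re, Complex.ofReal_re] at h
      linarith
    have hM0 : (0:ℝ) < M := lt_of_lt_of_le one_pos hM
    have hMt1 : M * t ≤ 1 := by
      have h2 := mul_le_mul_of_nonneg_left hle (le_of_lt hM0)
      rwa [mul_inv_cancel₀ (ne_of_gt hM0)] at h2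
    have hlogb : Real.logb 2 (M * t) ≤ 0 :=
      Real.logb_nonpos one_lt_two (by positivity) hMt1
    rw [Real.logb_mul (ne_of_gt hM0) (ne_of_gt ht0)] at hlogb
    linarith
end
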